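/- (Theorem 2, Case (ii).) Let P ∈ ℝ^{n×n} be symmetric positive definite with nonpositive off-diagonal entries (−P is Metzler), Γ ∈ ℝ^{n×l₂} with Γ ≥ 0, and suppose ΓC₂ ≥ 0, ΓV_b ≥ 0, ΓD_b ≥ 0 (entrywise). Set L := P⁻¹Γ. Then L ≥ 0, LC₂ ≥ 0, LV_b ≥ 0, LD_b ≥ 0. Moreover, for any nonnegative sequence e^x_k ∈ ℝⁿ and vectors δ^ρ_k, δ^{ψ₂}_k, δ^v, δ^w, δ^ε ≥ 0 satisfying the error-dynamics equality e^x_{k+1} = |A−LC₂|·e^x_k + δ^ρ_k + |L|·δ^{ψ₂}_k + |Ŵ|·δ^w + (|V_a − LV_b| − |A−LC₂|·|ΛNV₂| + |ΛNV₂|)·δ^v + (|Λ| + |D_a − LD_b| − |A−LC₂|·|Λ|)·δ^ε and the bounds δ^ρ_k ≤ F̄_ρ·e^x_k, δ^{ψ₂}_k ≤ F̄_{ψ₂}·e^x_k, it holds (by the triangle inequality and the identities |LC₂| = LC₂, |LV_b| = LV_b, |LD_b| = LD_b) that e^x_{k+1} ≤ (|A| + LC₂ + F̄_ρ + L·F̄_{ψ₂})·e^x_k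 + (|V_a| + LV_b + |ΛNV₂|)·δ^v + |Ŵ|·δ^w + (|Λ| + |D_a| + LD_b)·δ^ε; i.e., the nonlinear error dynamics is upper-bounded by a linear comparison system in which the gain L enters linearly. -/

import Mathlib

open Matrix

/-- Entrywise nonnegative part `M⁺ = max(M, 0)` of a real matrix. -/
noncomputable def matPos {m n : ℕ} (M : Matrix (Fin m) (Fin n) ℝ) : Matrix (Fin m) (Fin n) ℝ :=
  Matrix.of fun i j => max (M i j) 0

/-- Entrywise `M⁻ = M⁺ − M`. -/
noncomputable def matNeg {m n : ℕ} (M : Matrix (Fin m) (Fin n) ℝ) : Matrix (Fin m) (Fin n) ℝ :=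
  matPos M - M

/-- Entrywise absolute value `|M| = M⁺ + M⁻`. -/
noncomputable def matAbs {m n : ℕ} (M : Matrix (Fin m) (Fin n) ℝ) : Matrix (Fin m) (Fin n) ℝ :=
  matPos M + matNeg M

lemma matAbs_apply {m n : ℕ} (M : Matrix (Fin m) (Fin n) ℝ) (i : Fin m) (j : Fin n) :
    matAbs M i j = |M i j| := by
  simp only [matAbs, matPos, matNeg, Matrix.add_apply, Matrix.sub_apply, Matrix.of_apply]
  rcases le_total 0 (M i j) with h | h
  · rw [abs_of_nonneg h, max_eq_left h]; ring
  · rw [abs_of_nonpos h, max_eq_right h]; ring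

/-- Inverse-positivity of symmetric positive definite matrices with
nonpositive off-diagonal entries (M-matrices). -/
lemma inv_entry_nonneg {n : ℕ} {P : Matrix (Fin n) (Fin n) ℝ} (hP : P.PosDef)
    (hPoff : ∀ i j, i ≠ j → P i j ≤ 0) : ∀ i j, 0 ≤ P⁻¹ i j := by
  intro i j
  have hdet : IsUnit P.det := (Matrix.isUnit_iff_isUnit_det P).mp hP.isUnit
  set x : Fin n → ℝ := fun i => P⁻¹ i j with hxdef
  have hPx : ∀ i', P.mulVec x i' = (1 : Matrix (Fin n) (Fin n) ℝ) i' j := by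
    intro i'
    rw [← Matrix.mul_nonsing_inv P hdet]
    simp [Matrix.mulVec, Matrix.mul_apply, dotProduct, x]
  set xp : Fin n → ℝ := fun i => max (x i) 0 with hxp
  set xm : Fin n → ℝ := fun i => max (-(x i)) 0 with hxm
  have hxm_nonneg : ∀ i', 0 ≤ xm i' := fun i' => le_max_right _ _
  have hxp_nonneg : ∀ i', 0 ≤ xp i' := fun i' => le_max_right _ _
  have hsplit : ∀ i', x i' = xp i' - xm i' := by
    intro i'
    rcases le_total 0 (x i') with h | h
    · simp [xp, xm, max_eq_left h, max_eq_right (neg_nonpos_of_nonneg h)]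
    · simp [xp, xm, max_eq_right h, max_eq_left (neg_nonneg_of_nonpos h)]
  have hprod_zero : ∀ i', xm i' * xp i' = 0 := by
    intro i'
    rcases le_total 0 (x i') with h | h
    · simp [xm, max_eq_right (neg_nonpos_of_nonneg h)]
    · simp [xp, max_eq_right h]
  have hxmv : xm = xp - x := by
    funext i'; simp only [Pi.sub_apply]; linarith [hsplit i']
  -- the quadratic form of xm is nonpositive
  have hq : dotProduct xm (P.mulVec xm) ≤ 0 := by
    have e1 : P.mulVec xm = P.mulVec xp - P.mulVec x := by
      rw [← Matrix.mulVec_sub, ← hxmv]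
    rw [e1, dotProduct_sub]
    have h1 : dotProduct xm (P.mulVec xp) ≤ 0 := by
      have : ∀ i' ∈ Finset.univ, xm i' * (P.mulVec xp) i' ≤ 0 := by
        intro i' _
        simp only [Matrix.mulVec, dotProduct]
        rw [Finset.mul_sum]
        apply Finset.sum_nonpos
        intro k _
        rcases eq_or_ne i' k with rfl | hne
        · have : xm i' * (P i' i' * xp i') = P i' i' * (xm i' * xp i') := by ring
          rw [this, hprod_zero i', mul_zero]
        · have h2 : P i' k * xp k ≤ 0 :=
            mul_nonpos_of_nonpos_of_nonneg (hPoff i' k hne) (hxp_nonneg k)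
          exact mul_nonpos_of_nonneg_of_nonpos (hxm_nonneg i') h2
      calc dotProduct xm (P.mulVec xp) = ∑ i', xm i' * (P.mulVec xp) i' := rfl
        _ ≤ 0 := Finset.sum_nonpos (fun i' _ => this i' (Finset.mem_univ i'))
    have h2 : 0 ≤ dotProduct xm (P.mulVec x) := by
      have : dotProduct xm (P.mulVec x) = xm j := by
        simp only [dotProduct]
        rw [Finset.sum_congr rfl (fun i' _ => by rw [hPx i'])]
        simp [Matrix.one_apply]
      rw [this]; exact hxm_nonneg j
    linarith
  have hxm0 : xm = 0 := by
    by_contra h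
    have h0 := hP.dotProduct_mulVec_pos h
    simp only [star_trivial] at h0
    have e1 : P.mulVec xm = P.mulVec xp - P.mulVec x := by
      rw [← Matrix.mulVec_sub, ← hxmv]
    rw [e1, dotProduct_sub] at hq h0
    linarith
  have hzero : xm i = 0 := congrFun hxm0 i
  have hx : -(x i) ≤ 0 := by
    have hle : -(x i) ≤ xm i := le_max_left _ _
    rw [hzero] at hle; exact hle
  exact neg_nonpos.mp hx

lemma mul_entry_nonneg {m n p : ℕ} {M : Matrix (Fin m) (Fin n) ℝ} {N : Matrix (Fin n) (Fin p) ℝ}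
    (hM : ∀ i j, 0 ≤ M i j) (hN : ∀ i j, 0 ≤ N i j) : ∀ i j, 0 ≤ (M * N) i j := by
  intro i j
  rw [Matrix.mul_apply]
  exact Finset.sum_nonneg fun k _ => mul_nonneg (hM i k) (hN k j)

lemma mulVec_le_mulVec {m n : ℕ} {M1 M2 : Matrix (Fin m) (Fin n) ℝ} {v : Fin n → ℝ}
    (h : ∀ i j, M1 i j ≤ M2 i j) (hv : 0 ≤ v) : M1.mulVec v ≤ M2.mulVec v := by
  intro i
  simp only [Matrix.mulVec, dotProduct]
  exact Finset.sum_le_sum fun j _ => mul_le_mul_of_nonneg_right (h i j) (hv j)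

lemma mulVec_mono_vec {m n : ℕ} {M : Matrix (Fin m) (Fin n) ℝ} {v1 v2 : Fin n → ℝ}
    (hM : ∀ i j, 0 ≤ M i j) (h : v1 ≤ v2) : M.mulVec v1 ≤ M.mulVec v2 := by
  intro i
  simp only [Matrix.mulVec, dotProduct]
  exact Finset.sum_le_sum fun j _ => mul_le_mul_of_nonneg_left (h j) (hM i j)

/-- Theorem 2, Case (ii): positivity of the designed gain and the
linear comparison system for the error dynamics, with the gain entering linearly. -/
theorem iss_synthesis_case_ii
    {n nw nv p1 l2 : ℕ}
    (W : Matrix (Fin n) (Fin nw) ℝ) (G1 : Matrix (Fin n) (Fin p1) ℝ)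
    (V1 : Matrix (Fin p1) (Fin nv) ℝ) (V2 : Matrix (Fin l2) (Fin nv) ℝ)
    (C2 : Matrix (Fin l2) (Fin n) ℝ) (S : Matrix (Fin p1) (Fin p1) ℝ)
    (A Λ : Matrix (Fin n) (Fin n) ℝ) (N : Matrix (Fin n) (Fin l2) ℝ)
    (Va : Matrix (Fin n) (Fin nv) ℝ)
    (hVa : Va = A * Λ * N * V2 + Λ * (1 - N * C2) * G1 * S * V1)
    (Vb : Matrix (Fin l2) (Fin nv) ℝ) (hVb : Vb = (C2 * Λ * N - 1) * V2)
    (Da : Matrix (Fin n) (Fin n) ℝ) (hDa : Da = A * Λ)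
    (Db : Matrix (Fin l2) (Fin n) ℝ) (hDb : Db = C2 * Λ)
    (What : Matrix (Fin n) (Fin nw) ℝ) (hWhat : What = Λ * (1 - N * C2) * W)
    (Fρ : Matrix (Fin n) (Fin n) ℝ) (Fψ2 : Matrix (Fin l2) (Fin n) ℝ)
    (hFρ : ∀ i j, 0 ≤ Fρ i j) (hFψ2 : ∀ i j, 0 ≤ Fψ2 i j)
    (P : Matrix (Fin n) (Fin n) ℝ) (hP : P.PosDef)
    (hPoff : ∀ i j, i ≠ j → P i j ≤ 0)
    (Γ : Matrix (Fin n) (Fin l2) ℝ) (hΓ : ∀ i j, 0 ≤ Γ i j)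
    (hΓC2 : ∀ i j, 0 ≤ (Γ * C2) i j)
    (hΓVb : ∀ i j, 0 ≤ (Γ * Vb) i j)
    (hΓDb : ∀ i j, 0 ≤ (Γ * Db) i j)
    (L : Matrix (Fin n) (Fin l2) ℝ) (hL : L = P⁻¹ * Γ) :
    (∀ i j, 0 ≤ L i j) ∧
    (∀ i j, 0 ≤ (L * C2) i j) ∧
    (∀ i j, 0 ≤ (L * Vb) i j) ∧
    (∀ i j, 0 ≤ (L * Db) i j) ∧
    (∀ (e : ℕ → Fin n → ℝ) (δρ : ℕ → Fin n → ℝ) (δψ2 : ℕ → Fin l2 → ℝ)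
      (δv : Fin nv → ℝ) (δw : Fin nw → ℝ) (δε : Fin n → ℝ),
      (∀ k, 0 ≤ e k) → (∀ k, 0 ≤ δρ k) → (∀ k, 0 ≤ δψ2 k) →
      0 ≤ δv → 0 ≤ δw → 0 ≤ δε →
      (∀ k, e (k + 1) =
        (matAbs (A - L * C2)).mulVec (e k) + δρ k + (matAbs L).mulVec (δψ2 k) +
        (matAbs What).mulVec δw +
        (matAbs (Va - L * Vb) - matAbs (A - L * C2) * matAbs (Λ * N * V2) +
          matAbs (Λ * N * V2)).mulVec δv +
        (matAbs Λ + matAbs (Da - L * Db) - matAbs (A - L * C2) * matAbs Λ).mulVec δε) →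
      (∀ k, δρ k ≤ Fρ.mulVec (e k)) → (∀ k, δψ2 k ≤ Fψ2.mulVec (e k)) →
      ∀ k, e (k + 1) ≤
        (matAbs A + L * C2 + Fρ + L * Fψ2).mulVec (e k) +
        (matAbs Va + L * Vb + matAbs (Λ * N * V2)).mulVec δv +
        (matAbs What).mulVec δw +
        (matAbs Λ + matAbs Da + L * Db).mulVec δε) := by
  have hPinv : ∀ i j, 0 ≤ P⁻¹ i j := inv_entry_nonneg hP hPoff
  have hLpos : ∀ i j, 0 ≤ L i j := by
    rw [hL]; exact mul_entry_nonneg hPinv hΓ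
  have hLC2 : ∀ i j, 0 ≤ (L * C2) i j := by
    rw [hL, Matrix.mul_assoc]; exact mul_entry_nonneg hPinv hΓC2
  have hLVb : ∀ i j, 0 ≤ (L * Vb) i j := by
    rw [hL, Matrix.mul_assoc]; exact mul_entry_nonneg hPinv hΓVb
  have hLDb : ∀ i j, 0 ≤ (L * Db) i j := by
    rw [hL, Matrix.mul_assoc]; exact mul_entry_nonneg hPinv hΓDb
  refine ⟨hLpos, hLC2, hLVb, hLDb, ?_⟩
  intro e δρ δψ2 δv δw δε he hδρ hδψ hδv hδw hδε heq hρb hψb k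
  -- matAbs nonnegativity
  have habs_nonneg : ∀ {a b : ℕ} (M : Matrix (Fin a) (Fin b) ℝ) (i j), 0 ≤ matAbs M i j := by
    intro a b M i j; rw [matAbs_apply]; exact abs_nonneg _
  -- c1 : bound on the e-term
  have c1 : (matAbs (A - L * C2)).mulVec (e k) ≤ (matAbs A + L * C2).mulVec (e k) := by
    apply mulVec_le_mulVec _ (he k)
    intro i j
    rw [matAbs_apply, Matrix.add_apply, matAbs_apply, Matrix.sub_apply]
    calc |A i j - (L * C2) i j| ≤ |A i j| + |(L * C2) i j| := abs_sub _ _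
      _ = |A i j| + (L * C2) i j := by rw [abs_of_nonneg (hLC2 i j)]
  -- c3 : bound on the ψ-term
  have hAbsL : matAbs L = L := by
    funext i j; rw [matAbs_apply, abs_of_nonneg (hLpos i j)]
  have c3 : (matAbs L).mulVec (δψ2 k) ≤ (L * Fψ2).mulVec (e k) := by
    rw [hAbsL, ← Matrix.mulVec_mulVec]
    exact mulVec_mono_vec hLpos (hψb k)
  -- c4 : bound on the v-term
  have c4 : (matAbs (Va - L * Vb) - matAbs (A - L * C2) * matAbs (Λ * N * V2) +
        matAbs (Λ * N * V2)).mulVec δv ≤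
      (matAbs Va + L * Vb + matAbs (Λ * N * V2)).mulVec δv := by
    apply mulVec_le_mulVec _ hδv
    intro i j
    simp only [Matrix.add_apply, Matrix.sub_apply]
    have h1 : matAbs (Va - L * Vb) i j ≤ matAbs Va i j + (L * Vb) i j := by
      rw [matAbs_apply, matAbs_apply, Matrix.sub_apply]
      calc |Va i j - (L * Vb) i j| ≤ |Va i j| + |(L * Vb) i j| := abs_sub _ _
        _ = |Va i j| + (L * Vb) i j := by rw [abs_of_nonneg (hLVb i j)]
    have h2 : 0 ≤ (matAbs (A - L * C2) * matAbs (Λ * N * V2)) i j :=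
      mul_entry_nonneg (habs_nonneg _) (habs_nonneg _) i j
    linarith
  -- c5 : bound on the ε-term
  have c5 : (matAbs Λ + matAbs (Da - L * Db) - matAbs (A - L * C2) * matAbs Λ).mulVec δε ≤
      (matAbs Λ + matAbs Da + L * Db).mulVec δε := by
    apply mulVec_le_mulVec _ hδε
    intro i j
    simp only [Matrix.add_apply, Matrix.sub_apply]
    have h1 : matAbs (Da - L * Db) i j ≤ matAbs Da i j + (L * Db) i j := by
      rw [matAbs_apply, matAbs_apply, Matrix.sub_apply]
      calc |Da i j - (L * Db) i j| ≤ |Da i j| + |(L * Db) i j| := abs_sub _ _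
        _ = |Da i j| + (L * Db) i j := by rw [abs_of_nonneg (hLDb i j)]
    have h2 : 0 ≤ (matAbs (A - L * C2) * matAbs Λ) i j :=
      mul_entry_nonneg (habs_nonneg _) (habs_nonneg _) i j
    linarith
  -- combine pointwise
  intro i
  have heqi := congrFun (heq k) i
  have hc1 := c1 i
  have hc2 := hρb k i
  have hc3 := c3 i
  have hc4 := c4 i
  have hc5 := c5 i
  simp only [Matrix.add_mulVec, Pi.add_apply] at heqi hc1 hc3 hc4 hc5 ⊢
  linarith
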